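/- There exist a countable, connected, locally finite simple graph G, a function r assigning positive resistances to its edges with ∑_{e∈E} r(e) < ∞, and an antisymmetric function z : V × V → ℝ, not identically zero, vanishing on non-adjacent pairs, such that z satisfies Kirchhoff's node law at every vertex (the flows out of every vertex sum to 0), z is cut-respecting (for every set X of vertices such that only finitely many edges join X to V∖X, the net flow ∑_{xy∈E, x∈X, y∉X} z(x,y) equals 0), and z satisfies Kirchhoff's cycle law. (By the uniqueness theorem, any such z necessarily has infinite energy, so the finite-energy hypothesis cannot be dropped.) -/

import Mathlib

open scoped ENNReal Classical

/-- `f` is a flow of intensity `I` from `p` to `q` in the graph `G`: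
it is antisymmetric, vanishes on non-adjacent pairs, and satisfies
Kirchhoff's node law at every vertex (the family of values on edges leaving a
vertex is summable, with sum `I` at `p`, `-I` at `q` and `0` elsewhere). -/
def IsFlow {V : Type} (G : SimpleGraph V) (p q : V) (I : ℝ) (f : V → V → ℝ) : Prop :=
  (∀ x y, f x y = - f y x) ∧
  (∀ x y, ¬ G.Adj x y → f x y = 0) ∧
  ∀ x : V, HasSum (fun y : G.neighborSet x => f x y)
    (if x = p then I else if x = q then -I else 0)

/-- The energy `W(f) = ∑_{xy ∈ E} f(x,y)² r(xy)`; each edge of `G` corresponds to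
exactly two ordered adjacent pairs contributing the same amount, whence the
division by 2. Valued in `ℝ≥0∞`. -/
noncomputable def energy {V : Type} (G : SimpleGraph V) (r : Sym2 V → ℝ)
    (f : V → V → ℝ) : ℝ≥0∞ :=
  (∑' e : {e : V × V // G.Adj e.1 e.2},
      ENNReal.ofReal (f e.1.1 e.1.2 ^ 2 * r s(e.1.1, e.1.2))) / 2

/-- Kirchhoff's cycle law: around every (finite) cycle the potential
differences `f(x,y) · r(xy)` sum to zero. -/
def CycleLaw {V : Type} (G : SimpleGraph V) (r : Sym2 V → ℝ) (f : V → V → ℝ) : Prop :=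
  ∀ (v : V) (c : G.Walk v v), c.IsCycle →
    (c.darts.map (fun d => f d.toProd.1 d.toProd.2 * r d.edge)).sum = 0

/-- `f` is cut-respecting: for every set `X` of vertices containing both `p` and `q`
such that only finitely many edges join `X` to its complement, the net flow
across the cut is zero. -/
def CutRespecting {V : Type} (G : SimpleGraph V) (p q : V) (f : V → V → ℝ) : Prop :=
  ∀ X : Set V, p ∈ X → q ∈ X →
    ∀ hX : {e : V × V | e.1 ∈ X ∧ e.2 ∉ X ∧ G.Adj e.1 e.2}.Finite,
      ∑ e ∈ hX.toFinset, f e.1 e.2 = 0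

namespace GridExample

abbrev Vx := ℤ × ℤ

def G : SimpleGraph Vx where
  Adj := fun x y =>
    (x.2 = y.2 ∧ (x.1 = y.1 + 1 ∨ y.1 = x.1 + 1)) ∨
    (x.1 = y.1 ∧ (x.2 = y.2 + 1 ∨ y.2 = x.2 + 1))
  symm := by constructor; intro x y h; omega
  loopless := by constructor; intro x h; omega

lemma adj_iff {x y : Vx} : G.Adj x y ↔
    (x.2 = y.2 ∧ (x.1 = y.1 + 1 ∨ y.1 = x.1 + 1)) ∨
    (x.1 = y.1 ∧ (x.2 = y.2 + 1 ∨ y.2 = x.2 + 1)) := Iff.rfl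

noncomputable def δ (n : ℤ) : ℝ := (1/2 : ℝ) ^ n.natAbs
noncomputable def w (n : ℤ) : ℝ := (2 : ℝ) ^ n.natAbs

lemma δ_pos (n : ℤ) : 0 < δ n := by rw [δ]; positivity

lemma w_mul_δ (n : ℤ) : w n * δ n = 1 := by
  rw [w, δ, ← mul_pow]; norm_num

noncomputable def z (x y : Vx) : ℝ :=
  if x.2 = y.2 ∧ y.1 = x.1 + 1 then w x.2
  else if x.2 = y.2 ∧ x.1 = y.1 + 1 then - w x.2
  else 0

lemma z_antisymm (x y : Vx) : z x y = - z y x := by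
  unfold z
  split_ifs with h1 h2 h3 h4 h5 h6 h7 h8
  all_goals try omega
  all_goals try (rw [show x.2 = y.2 by omega]; try ring)
  all_goals norm_num

lemma z_eq_zero_of_not_adj (x y : Vx) (h : ¬ G.Adj x y) : z x y = 0 := by
  rw [adj_iff] at h
  unfold z
  split_ifs with h1 h2 <;> first | rfl | omega

lemma z_support {x y : Vx} (h : z x y ≠ 0) :
    y = (x.1 + 1, x.2) ∨ y = (x.1 - 1, x.2) := by
  unfold z at h
  split_ifs at h with h1 h2
  · left; rw [Prod.ext_iff]; simp only [Prod.fst, Prod.snd]; omega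
  · right; rw [Prod.ext_iff]; simp only [Prod.fst, Prod.snd]; omega
  · exact absurd rfl h

lemma z_adj_of_ne {x y : Vx} (h : z x y ≠ 0) : G.Adj x y := by
  by_contra hc; exact h (z_eq_zero_of_not_adj x y hc)

noncomputable def r : Sym2 Vx → ℝ :=
  Sym2.lift ⟨fun x y => δ (min x.1 y.1) * δ (min x.2 y.2), by
    intro x y; dsimp only; rw [min_comm x.1, min_comm x.2]⟩

lemma r_mk (x y : Vx) : r s(x, y) = δ (min x.1 y.1) * δ (min x.2 y.2) := by
  simp [r]

noncomputable def F (n : ℤ) : ℝ :=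
  if 0 ≤ n then 3 - 2 * (1/2 : ℝ) ^ n.toNat else (1/2 : ℝ) ^ n.natAbs

lemma F_succ (n : ℤ) : F (n + 1) - F n = δ n := by
  rcases le_or_gt 0 n with h | h
  · have h1 : 0 ≤ n + 1 := by omega
    have h2 : (n+1).toNat = n.toNat + 1 := by omega
    have h3 : n.natAbs = n.toNat := by omega
    unfold F δ
    rw [if_pos h1, if_pos h, h2, h3]
    ring
  · rcases eq_or_lt_of_le (show n ≤ -1 by omega) with h0 | h0
    · subst h0
      norm_num [F, δ]
    · have h1 : ¬ (0 ≤ n + 1) := by omega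
      have h2 : ¬ (0 ≤ n) := by omega
      have h3 : n.natAbs = (n+1).natAbs + 1 := by omega
      unfold F δ
      rw [if_neg h1, if_neg h2, h3]
      ring

lemma dart_prod {x y : Vx} (h : G.Adj x y) :
    z x y * r s(x, y) = F y.1 - F x.1 := by
  rw [adj_iff] at h
  rcases h with ⟨hv, hh⟩ | ⟨hh, hv⟩
  · rcases hh with h1 | h1
    · -- x.1 = y.1 + 1, leftward dart
      have hz : z x y = - w x.2 := by
        unfold z; rw [if_neg (by omega), if_pos ⟨hv, h1⟩]
      have hm1 : min x.1 y.1 = y.1 := by omega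
      have hm2 : min x.2 y.2 = x.2 := by omega
      rw [hz, r_mk, hm1, hm2]
      have : -w x.2 * (δ y.1 * δ x.2) = -(δ y.1 * (w x.2 * δ x.2)) := by ring
      rw [this, w_mul_δ, mul_one, ← F_succ y.1, ← h1]
      ring
    · -- y.1 = x.1 + 1, rightward dart
      have hz : z x y = w x.2 := by
        unfold z; rw [if_pos ⟨hv, h1⟩]
      have hm1 : min x.1 y.1 = x.1 := by omega
      have hm2 : min x.2 y.2 = x.2 := by omega
      rw [hz, r_mk, hm1, hm2]
      have : w x.2 * (δ x.1 * δ x.2) = δ x.1 * (w x.2 * δ x.2) := by ring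
      rw [this, w_mul_δ, mul_one, ← F_succ x.1, ← h1]
  · have hz : z x y = 0 := by
      unfold z; rw [if_neg (by omega), if_neg (by omega)]
    rw [hz, hh]; ring

lemma walk_telescope {u v : Vx} (p : G.Walk u v) :
    (p.darts.map fun d => F d.toProd.2.1 - F d.toProd.1.1).sum = F v.1 - F u.1 := by
  induction p with
  | nil => simp
  | cons h p ih =>
    rw [SimpleGraph.Walk.darts_cons, List.map_cons, List.sum_cons, ih]
    ring



lemma z_irrefl (x : Vx) : z x x = 0 := by
  unfold z; rw [if_neg (by omega), if_neg (by omega)]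

def nbr (x : Vx) : Finset Vx :=
  {(x.1 + 1, x.2), (x.1 - 1, x.2), (x.1, x.2 + 1), (x.1, x.2 - 1)}

lemma mem_nbr {x y : Vx} : y ∈ nbr x ↔
    y = (x.1 + 1, x.2) ∨ y = (x.1 - 1, x.2) ∨ y = (x.1, x.2 + 1) ∨ y = (x.1, x.2 - 1) := by
  simp [nbr]

lemma nbr_symm {x y : Vx} (h : y ∈ nbr x) : x ∈ nbr y := by
  rw [mem_nbr, Prod.ext_iff, Prod.ext_iff, Prod.ext_iff, Prod.ext_iff] at *
  omega

lemma z_nbr {x y : Vx} (h : z x y ≠ 0) : y ∈ nbr x := by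
  rcases z_support h with h' | h' <;> rw [mem_nbr] <;> tauto

lemma z_right (x : Vx) : z x (x.1 + 1, x.2) = w x.2 := by
  unfold z; rw [if_pos ⟨rfl, rfl⟩]

lemma z_left (x : Vx) : z x (x.1 - 1, x.2) = - w x.2 := by
  unfold z; rw [if_neg (by omega), if_pos ⟨rfl, by omega⟩]

lemma z_up (x : Vx) : z x (x.1, x.2 + 1) = 0 := by
  unfold z; rw [if_neg (by omega), if_neg (by omega)]

lemma z_down (x : Vx) : z x (x.1, x.2 - 1) = 0 := by
  unfold z; rw [if_neg (by omega), if_neg (by omega)]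

lemma node (x : Vx) : ∑ y ∈ nbr x, z x y = 0 := by
  rw [nbr]
  rw [Finset.sum_insert (by rw [Finset.mem_insert, Finset.mem_insert, Finset.mem_singleton, Prod.ext_iff, Prod.ext_iff, Prod.ext_iff]; omega),
      Finset.sum_insert (by rw [Finset.mem_insert, Finset.mem_singleton, Prod.ext_iff, Prod.ext_iff]; omega),
      Finset.sum_insert (by rw [Finset.mem_singleton, Prod.ext_iff]; omega),
      Finset.sum_singleton]
  rw [z_right, z_left, z_up, z_down]; ring

lemma hasSum_z (x : Vx) : HasSum (z x) 0 := by
  have hne : ((x.1 + 1 : ℤ), x.2) ≠ ((x.1 - 1 : ℤ), x.2) := by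
    rw [Ne, Prod.ext_iff]; omega
  have h := hasSum_sum_of_ne_finset_zero
    (s := {((x.1 + 1 : ℤ), x.2), ((x.1 - 1 : ℤ), x.2)}) (f := z x) (L := SummationFilter.unconditional _) ?_
  · rwa [Finset.sum_pair hne, z_right, z_left, add_neg_cancel] at h
  · intro y hy
    by_contra hz
    rcases z_support hz with h' | h' <;> subst h' <;>
      simp [Finset.mem_insert, Finset.mem_singleton] at hy <;> omega

lemma nbhd_finite (x : Vx) : (G.neighborSet x).Finite := by
  apply Set.Finite.subset (nbr x).finite_toSet
  intro y hy
  rw [SimpleGraph.mem_neighborSet, adj_iff] at hy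
  rw [Finset.mem_coe, mem_nbr]
  rw [Prod.ext_iff, Prod.ext_iff, Prod.ext_iff, Prod.ext_iff]
  omega

lemma node_law (x : Vx) : HasSum (fun y : G.neighborSet x => z x y) 0 := by
  have he : (G.neighborSet x).indicator (z x) = z x := by
    funext y
    by_cases hy : y ∈ G.neighborSet x
    · rw [Set.indicator_of_mem hy]
    · rw [Set.indicator_of_notMem hy, z_eq_zero_of_not_adj]
      exact hy
  have h2 : HasSum ((z x) ∘ (Subtype.val : G.neighborSet x → Vx)) 0 := by
    refine (hasSum_subtype_iff_indicator (s := G.neighborSet x) (f := z x)).2 ?_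
    rw [he]
    exact hasSum_z x
  exact h2

lemma summable_δ : Summable δ := by
  have h : Summable fun n : ℕ => (1/2 : ℝ) ^ n :=
    summable_geometric_of_lt_one (by norm_num) (by norm_num)
  apply Summable.of_nat_of_neg
  · simpa [δ] using h
  · simpa [δ] using h

noncomputable def ιf : Sym2 Vx → (ℤ × ℤ) ⊕ (ℤ × ℤ) :=
  Sym2.lift ⟨fun x y => if x.2 = y.2 then Sum.inl (min x.1 y.1, x.2)
      else Sum.inr (min x.1 y.1, min x.2 y.2), by
    intro x y; dsimp only
    by_cases h : x.2 = y.2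
    · rw [if_pos h, if_pos h.symm, min_comm, h]
    · rw [if_neg h, if_neg (Ne.symm h), min_comm x.1, min_comm x.2]⟩

lemma ιf_mk (x y : Vx) : ιf s(x, y) = if x.2 = y.2 then Sum.inl (min x.1 y.1, x.2)
    else Sum.inr (min x.1 y.1, min x.2 y.2) := by simp [ιf]

lemma ιf_recover : ∀ e ∈ G.edgeSet, ∀ n m : ℤ,
    (ιf e = Sum.inl (n, m) → e = s(((n : ℤ), m), (n + 1, m))) ∧
    (ιf e = Sum.inr (n, m) → e = s(((n : ℤ), m), (n, m + 1))) := by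
  intro e
  induction e with
  | _ x y =>
    intro hemem n m
    have he : (x.2 = y.2 ∧ (x.1 = y.1 + 1 ∨ y.1 = x.1 + 1)) ∨
        (x.1 = y.1 ∧ (x.2 = y.2 + 1 ∨ y.2 = x.2 + 1)) :=
      adj_iff.1 ((SimpleGraph.mem_edgeSet G).1 hemem)
    constructor
    · intro h
      rw [ιf_mk] at h
      split_ifs at h with hc
      · injection h with h
        rw [Prod.ext_iff] at h
        obtain ⟨h1, h2⟩ := h
        rcases he with ⟨h3, h4 | h4⟩ | ⟨h3, h4⟩
        · rw [min_eq_right (by omega : y.1 ≤ x.1)] at h1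
          rw [Sym2.eq_iff]
          right
          rw [Prod.ext_iff, Prod.ext_iff]
          constructor
          · constructor <;> omega
          · constructor <;> omega
        · rw [min_eq_left (by omega : x.1 ≤ y.1)] at h1
          rw [Sym2.eq_iff]
          left
          rw [Prod.ext_iff, Prod.ext_iff]
          constructor
          · constructor <;> omega
          · constructor <;> omega
        · omega
    · intro h
      rw [ιf_mk] at h
      split_ifs at h with hc
      · injection h with h
        rw [Prod.ext_iff] at h
        obtain ⟨h1, h2⟩ := h
        rcases he with ⟨h3, h4⟩ | ⟨h3, h4 | h4⟩
        · omega
        · rw [min_eq_left (by omega : x.1 ≤ y.1), min_eq_right (by omega : y.2 ≤ x.2)] at *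
          rw [Sym2.eq_iff]
          right
          rw [Prod.ext_iff, Prod.ext_iff]
          exact ⟨⟨by omega, by omega⟩, by omega, by omega⟩
        · rw [min_eq_left (by omega : x.1 ≤ y.1), min_eq_left (by omega : x.2 ≤ y.2)] at *
          rw [Sym2.eq_iff]
          left
          rw [Prod.ext_iff, Prod.ext_iff]
          exact ⟨⟨by omega, by omega⟩, by omega, by omega⟩

lemma ιf_inj : Function.Injective fun e : G.edgeSet => ιf e.1 := by
  rintro ⟨e, he⟩ ⟨e', he'⟩ h
  dsimp only at h
  apply Subtype.ext
  show e = e'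
  cases hv : ιf e with
  | inl p =>
    obtain ⟨n, m⟩ := p
    rw [(ιf_recover e he n m).1 hv, (ιf_recover e' he' n m).1 (by rw [← h, hv])]
  | inr p =>
    obtain ⟨n, m⟩ := p
    rw [(ιf_recover e he n m).2 hv, (ιf_recover e' he' n m).2 (by rw [← h, hv])]

lemma summable_r : Summable fun e : G.edgeSet => r e.1 := by
  have hδ := summable_δ
  have hδ0 : (0 : ℤ → ℝ) ≤ δ := fun n => (δ_pos n).le
  have hp : Summable fun p : ℤ × ℤ => δ p.1 * δ p.2 := hδ.mul_of_nonneg hδ hδ0 hδ0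
  have hg : Summable (Sum.elim (fun p : ℤ × ℤ => δ p.1 * δ p.2)
      (fun p : ℤ × ℤ => δ p.1 * δ p.2)) := by
    rw [← summable_subtype_and_compl (s := Set.range Sum.inl)]
    constructor
    · exact (Equiv.ofInjective _ Sum.inl_injective).summable_iff.1 hp
    · have : Summable ((fun x : Set.range (Sum.inr : ℤ × ℤ → (ℤ × ℤ) ⊕ (ℤ × ℤ)) =>
          Sum.elim (fun p : ℤ × ℤ => δ p.1 * δ p.2) (fun p : ℤ × ℤ => δ p.1 * δ p.2) ↑x)) :=
        (Equiv.ofInjective _ Sum.inr_injective).summable_iff.1 hp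
      rw [Set.compl_range_inl]
      exact this
  have hcomp := hg.comp_injective ιf_inj
  have heq : (Sum.elim (fun p : ℤ × ℤ => δ p.1 * δ p.2) (fun p : ℤ × ℤ => δ p.1 * δ p.2) ∘
      fun e : G.edgeSet => ιf e.1) = fun e : G.edgeSet => r e.1 := by
    funext e
    obtain ⟨e, he⟩ := e
    dsimp only [Function.comp]
    induction e with
    | _ x y =>
      rw [ιf_mk, r_mk]
      by_cases h : x.2 = y.2
      · rw [if_pos h, Sum.elim_inl]
        rw [show min x.2 y.2 = x.2 by rw [h, min_self]]
      · rw [if_neg h, Sum.elim_inr]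
  rwa [heq] at hcomp

lemma int_spread {P : ℤ → Prop} (hup : ∀ n, P n → P (n + 1))
    (hdown : ∀ n, P n → P (n - 1)) {a : ℤ} (ha : P a) : ∀ b, P b := by
  have key : ∀ k : ℕ, P (a + k) ∧ P (a - k) := by
    intro k; induction k with
    | zero => constructor <;> simpa using ha
    | succ k ih =>
      constructor
      · have := hup _ ih.1
        rwa [show a + (k : ℤ) + 1 = a + ((k : ℕ) + 1 : ℕ) by push_cast; ring] at this
      · have := hdown _ ih.2
        rwa [show a - (k : ℤ) - 1 = a - ((k : ℕ) + 1 : ℕ) by push_cast; ring] at this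
  intro b
  rcases le_or_gt a b with h | h
  · have := (key (b - a).toNat).1
    rwa [show a + ((b - a).toNat : ℤ) = b by omega] at this
  · have := (key (a - b).toNat).2
    rwa [show a - ((a - b).toNat : ℤ) = b by omega] at this

lemma reach_row (b a a' : ℤ) : G.Reachable (a, b) (a', b) := by
  refine int_spread (P := fun c => G.Reachable (a, b) (c, b)) ?_ ?_ (SimpleGraph.Reachable.refl _) a'
  · intro n h
    exact h.trans (SimpleGraph.Adj.reachable (Or.inl ⟨rfl, Or.inr rfl⟩))
  · intro n h
    refine h.trans (SimpleGraph.Adj.reachable ?_)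
    exact Or.inl ⟨rfl, Or.inl (by show n = n - 1 + 1; omega)⟩

lemma reach_col (a b b' : ℤ) : G.Reachable (a, b) (a, b') := by
  refine int_spread (P := fun c => G.Reachable (a, b) (a, c)) ?_ ?_ (SimpleGraph.Reachable.refl _) b'
  · intro n h
    exact h.trans (SimpleGraph.Adj.reachable (Or.inr ⟨rfl, Or.inr rfl⟩))
  · intro n h
    refine h.trans (SimpleGraph.Adj.reachable ?_)
    exact Or.inr ⟨rfl, Or.inl (by show n = n - 1 + 1; omega)⟩

lemma connected : G.Connected := by
  rw [SimpleGraph.connected_iff]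
  refine ⟨?_, ⟨(0, 0)⟩⟩
  rintro ⟨a, b⟩ ⟨a', b'⟩
  exact (reach_row b a a').trans (reach_col a' b b')



lemma dart_eq (d : G.Dart) : z d.toProd.1 d.toProd.2 * r d.edge =
    F d.toProd.2.1 - F d.toProd.1.1 := by
  have h := dart_prod d.adj
  have he : d.edge = s(d.toProd.1, d.toProd.2) := by
    rw [SimpleGraph.Dart.edge]
  rw [he]
  exact h

lemma cut_zero_of_finite (X : Set Vx) (hXf : X.Finite)
    (hB : {e : Vx × Vx | e.1 ∈ X ∧ e.2 ∉ X ∧ G.Adj e.1 e.2}.Finite) :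
    ∑ e ∈ hB.toFinset, z e.1 e.2 = 0 := by
  classical
  set A : Finset Vx := hXf.toFinset with hA
  set A' : Finset Vx := A ∪ A.biUnion nbr with hA'
  have hmemA : ∀ p : Vx, p ∈ A ↔ p ∈ X := fun p => hXf.mem_toFinset
  have hsubA' : A ⊆ A' := Finset.subset_union_left
  have hnbrA' : ∀ x ∈ A, nbr x ⊆ A' := by
    intro x hx y hy
    exact Finset.mem_union.2 (Or.inr (Finset.mem_biUnion.2 ⟨x, hx, hy⟩))
  set T : Finset (Vx × Vx) := A' ×ˢ A' with hT
  have S_all : ∑ p ∈ T.filter (fun p => p.1 ∈ A ∧ p.2 ∈ nbr p.1), z p.1 p.2 = 0 := by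
    rw [Finset.sum_filter, hT, Finset.sum_product]
    apply Finset.sum_eq_zero
    intro x hx
    by_cases hxA : x ∈ A
    · have hcongr : ∀ y ∈ A', (if x ∈ A ∧ y ∈ nbr x then z x y else 0) =
          if y ∈ nbr x then z x y else 0 := by
        intro y _; by_cases h : y ∈ nbr x <;> simp [h, hxA]
      rw [Finset.sum_congr rfl hcongr, Finset.sum_ite_mem,
        Finset.inter_eq_right.2 (hnbrA' x hxA)]
      exact node x
    · apply Finset.sum_eq_zero; intro y _; simp [hxA]
  have S_split := Finset.sum_filter_add_sum_filter_not
    (T.filter (fun p => p.1 ∈ A ∧ p.2 ∈ nbr p.1)) (fun p => p.2 ∈ A)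
    (fun p => z p.1 p.2)
  have S_int : ∑ p ∈ (T.filter (fun p => p.1 ∈ A ∧ p.2 ∈ nbr p.1)).filter
      (fun p => p.2 ∈ A), z p.1 p.2 = 0 := by
    refine Finset.sum_involution (fun p _ => p.swap) ?_ ?_ ?_ ?_
    · intro p hp
      show z p.1 p.2 + z p.2 p.1 = 0
      rw [z_antisymm p.1 p.2]; ring
    · intro p hp hzp hsw
      rw [Prod.ext_iff] at hsw
      obtain ⟨h1, h2⟩ := hsw
      apply hzp
      show z p.1 p.2 = 0
      have : p.2 = p.1 := h1
      rw [this]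
      exact z_irrefl p.1
    · intro p hp
      simp only [Finset.mem_filter, hT, Finset.mem_product] at hp ⊢
      obtain ⟨⟨⟨hm1, hm2⟩, hc1, hc2⟩, hq⟩ := hp
      exact ⟨⟨⟨hm2, hm1⟩, hq, nbr_symm hc2⟩, hc1⟩
    · intro p hp
      exact Prod.swap_swap p
  have hfinal : ∑ e ∈ hB.toFinset, z e.1 e.2 =
      ∑ p ∈ (T.filter (fun p => p.1 ∈ A ∧ p.2 ∈ nbr p.1)).filter
        (fun p => ¬ p.2 ∈ A), z p.1 p.2 := by
    rw [← Finset.sum_filter_ne_zero hB.toFinset,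
        ← Finset.sum_filter_ne_zero ((T.filter (fun p => p.1 ∈ A ∧ p.2 ∈ nbr p.1)).filter
          (fun p => ¬ p.2 ∈ A))]
    apply Finset.sum_congr ?_ (fun _ _ => rfl)
    ext p
    simp only [Finset.mem_filter, Set.Finite.mem_toFinset, Set.mem_setOf_eq, hT,
      Finset.mem_product]
    constructor
    · rintro ⟨⟨h1, h2, h3⟩, hz⟩
      have hnb : p.2 ∈ nbr p.1 := z_nbr hz
      have h1A : p.1 ∈ A := (hmemA _).2 h1
      exact ⟨⟨⟨⟨hsubA' h1A, hnbrA' _ h1A hnb⟩, h1A, hnb⟩,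
        fun hc => h2 ((hmemA _).1 hc)⟩, hz⟩
    · rintro ⟨⟨⟨_, h1A, hnb⟩, h2⟩, hz⟩
      exact ⟨⟨(hmemA _).1 h1A, fun hc => h2 ((hmemA _).2 hc), z_adj_of_ne hz⟩, hz⟩
  rw [hfinal]
  linarith [S_split, S_int, S_all]

lemma cut_zero (X : Set Vx)
    (hX : {e : Vx × Vx | e.1 ∈ X ∧ e.2 ∉ X ∧ G.Adj e.1 e.2}.Finite) :
    ∑ e ∈ hX.toFinset, z e.1 e.2 = 0 := by
  classical
  obtain ⟨N, hN⟩ : ∃ N : ℕ, ∀ e ∈ hX.toFinset, e.1.1.natAbs ≤ N ∧ e.1.2.natAbs ≤ N := by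
    refine ⟨hX.toFinset.sup (fun e => max e.1.1.natAbs e.1.2.natAbs), fun e he => ?_⟩
    have h1 := Finset.le_sup (f := fun e : Vx × Vx => max e.1.1.natAbs e.1.2.natAbs) he
    exact ⟨le_trans (le_max_left _ _) h1, le_trans (le_max_right _ _) h1⟩
  have mem_bd : ∀ p q : Vx, G.Adj p q → p ∈ X → q ∉ X → (p, q) ∈ hX.toFinset := by
    intro p q ha hp hq; rw [Set.Finite.mem_toFinset]; exact ⟨hp, hq, ha⟩
  have step_h : ∀ a b : ℤ, (N : ℤ) < b.natAbs → ((a, b) ∈ X ↔ (a + 1, b) ∈ X) := by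
    intro a b hb
    constructor
    · intro h; by_contra hc
      have := hN _ (mem_bd (a, b) (a + 1, b) (Or.inl ⟨rfl, Or.inr rfl⟩) h hc)
      simp at this; omega
    · intro h; by_contra hc
      have := hN _ (mem_bd (a + 1, b) (a, b) (Or.inl ⟨rfl, Or.inl rfl⟩) h hc)
      simp at this; omega
  have step_v : ∀ a b : ℤ, (N : ℤ) < a.natAbs → ((a, b) ∈ X ↔ (a, b + 1) ∈ X) := by
    intro a b ha
    constructor
    · intro h; by_contra hc
      have := hN _ (mem_bd (a, b) (a, b + 1) (Or.inr ⟨rfl, Or.inr rfl⟩) h hc)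
      simp at this; omega
    · intro h; by_contra hc
      have := hN _ (mem_bd (a, b + 1) (a, b) (Or.inr ⟨rfl, Or.inl rfl⟩) h hc)
      simp at this; omega
  have row_iff : ∀ b : ℤ, (N : ℤ) < b.natAbs → ∀ a a' : ℤ, ((a, b) ∈ X ↔ (a', b) ∈ X) := by
    intro b hb a
    refine int_spread (P := fun c => ((a, b) ∈ X ↔ (c, b) ∈ X)) ?_ ?_ Iff.rfl
    · intro n h; exact h.trans (step_h n b hb)
    · intro n h
      have h2 := step_h (n - 1) b hb
      rw [show n - 1 + 1 = n by ring] at h2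
      exact h.trans h2.symm
  have col_iff : ∀ a : ℤ, (N : ℤ) < a.natAbs → ∀ b b' : ℤ, ((a, b) ∈ X ↔ (a, b') ∈ X) := by
    intro a ha b
    refine int_spread (P := fun c => ((a, b) ∈ X ↔ (a, c) ∈ X)) ?_ ?_ Iff.rfl
    · intro n h; exact h.trans (step_v a n ha)
    · intro n h
      have h2 := step_v a (n - 1) ha
      rw [show n - 1 + 1 = n by ring] at h2
      exact h.trans h2.symm
  have hNN : (N : ℤ) < (((N : ℤ) + 1)).natAbs := by omega
  have mono : ∀ p : Vx, ((N : ℤ) < p.1.natAbs ∨ (N : ℤ) < p.2.natAbs) →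
      (p ∈ X ↔ ((N : ℤ) + 1, (N : ℤ) + 1) ∈ X) := by
    rintro ⟨a, b⟩ hp
    rcases hp with h | h
    · exact (col_iff a h b ((N : ℤ) + 1)).trans (row_iff ((N : ℤ) + 1) hNN a ((N : ℤ) + 1))
    · exact (row_iff b h a ((N : ℤ) + 1)).trans (col_iff ((N : ℤ) + 1) hNN b ((N : ℤ) + 1))
  by_cases hTop : ((N : ℤ) + 1, (N : ℤ) + 1) ∈ X
  · have hcf : {p : Vx | p ∉ X}.Finite := by
      apply Set.Finite.subset (Set.finite_Icc ((-(N : ℤ), -(N : ℤ))) (((N : ℤ), (N : ℤ))))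
      intro p hp
      simp only [Set.mem_setOf_eq] at hp
      by_contra hout
      rw [Set.mem_Icc, Prod.le_def, Prod.le_def] at hout
      have hor : (N : ℤ) < p.1.natAbs ∨ (N : ℤ) < p.2.natAbs := by omega
      exact hp ((mono p hor).2 hTop)
    have hBY : {e : Vx × Vx | e.1 ∈ {p : Vx | p ∉ X} ∧ e.2 ∉ {p : Vx | p ∉ X} ∧
        G.Adj e.1 e.2}.Finite := by
      apply Set.Finite.subset (hX.image Prod.swap)
      rintro ⟨p, q⟩ ⟨h1, h2, h3⟩
      simp only [Set.mem_setOf_eq] at h1 h2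
      exact ⟨(q, p), ⟨not_not.1 h2, h1, h3.symm⟩, rfl⟩
    have h0 := cut_zero_of_finite _ hcf hBY
    have htrans : ∑ e ∈ hX.toFinset, z e.1 e.2 = ∑ e ∈ hBY.toFinset, - z e.1 e.2 := by
      refine Finset.sum_nbij' Prod.swap Prod.swap ?_ ?_ ?_ ?_ ?_
      · intro e he
        rw [Set.Finite.mem_toFinset] at he ⊢
        obtain ⟨h1, h2, h3⟩ := he
        exact ⟨h2, not_not.2 h1, h3.symm⟩
      · intro e he
        rw [Set.Finite.mem_toFinset] at he ⊢
        obtain ⟨h1, h2, h3⟩ := he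
        simp only [Set.mem_setOf_eq] at h1 h2
        exact ⟨not_not.1 h2, h1, h3.symm⟩
      · intro e _; exact Prod.swap_swap e
      · intro e _; exact Prod.swap_swap e
      · intro e _
        show z e.1 e.2 = - z e.2 e.1
        exact z_antisymm e.1 e.2
    rw [htrans, Finset.sum_neg_distrib, h0, neg_zero]
  · have hxf : X.Finite := by
      apply Set.Finite.subset (Set.finite_Icc ((-(N : ℤ), -(N : ℤ))) (((N : ℤ), (N : ℤ))))
      intro p hp
      by_contra hout
      rw [Set.mem_Icc, Prod.le_def, Prod.le_def] at hout
      have hor : (N : ℤ) < p.1.natAbs ∨ (N : ℤ) < p.2.natAbs := by omega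
      exact hTop ((mono p hor).1 hp)
    exact cut_zero_of_finite X hxf hX



lemma z_ne : z ((0 : ℤ), (0 : ℤ)) ((1 : ℤ), (0 : ℤ)) ≠ 0 := by
  show z ((0 : ℤ), (0 : ℤ)) ((((0 : ℤ), (0 : ℤ)).1 + 1, ((0 : ℤ), (0 : ℤ)).2)) ≠ 0
  rw [z_right]
  unfold w; norm_num

lemma cycle_law : CycleLaw G r z := by
  intro v c _
  have hfun : (fun d : G.Dart => z d.toProd.1 d.toProd.2 * r d.edge) =
      fun d : G.Dart => F d.toProd.2.1 - F d.toProd.1.1 := funext dart_eq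
  rw [hfun, walk_telescope c]
  exact sub_self _

lemma r_pos : ∀ e ∈ G.edgeSet, 0 < r e := by
  intro e _
  induction e with
  | _ x y =>
    rw [r_mk]
    exact mul_pos (δ_pos _) (δ_pos _)

end GridExample


/-- There is a countable connected locally finite graph with summable positive
resistances carrying a nonzero antisymmetric function supported on edges that
satisfies Kirchhoff's node law everywhere, is cut-respecting (across every
finite cut) and satisfies Kirchhoff's cycle law.  (Necessarily of infinite
energy.) -/
theorem exists_nonzero_cutRespecting_circulation :
    ∃ (V : Type) (_ : Countable V) (G : SimpleGraph V) (r : Sym2 V → ℝ)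
      (z : V → V → ℝ),
      G.Connected ∧ (∀ v : V, (G.neighborSet v).Finite) ∧
      (∀ e ∈ G.edgeSet, 0 < r e) ∧ (Summable fun e : G.edgeSet => r e.1) ∧
      (∀ x y, z x y = - z y x) ∧ (∀ x y, ¬ G.Adj x y → z x y = 0) ∧
      (∃ x y, z x y ≠ 0) ∧
      (∀ x : V, HasSum (fun y : G.neighborSet x => z x y) 0) ∧
      (∀ X : Set V, ∀ hX : {e : V × V | e.1 ∈ X ∧ e.2 ∉ X ∧ G.Adj e.1 e.2}.Finite,
        ∑ e ∈ hX.toFinset, z e.1 e.2 = 0) ∧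
      CycleLaw G r z :=
  ⟨GridExample.Vx, inferInstance, GridExample.G, GridExample.r, GridExample.z,
    GridExample.connected, GridExample.nbhd_finite, GridExample.r_pos,
    GridExample.summable_r, GridExample.z_antisymm, GridExample.z_eq_zero_of_not_adj,
    ⟨((0 : ℤ), (0 : ℤ)), ((1 : ℤ), (0 : ℤ)), GridExample.z_ne⟩, GridExample.node_law,
    GridExample.cut_zero, GridExample.cycle_law⟩
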